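/- There exists a nonempty set G with G strictly contained in S such that the learned feature set at the end of the first experiment is always equal to G, regardless of the randomness (tie-breaking) of the training process and of whether warm-starting or cold-starting is used: L_warm^(1) = L_cold^(1) = G. Moreover, G satisfies |G ∩ S_c| ≥ τ−1 for every class c and G ∩ S_c ⊊ S_c for every class c. -/

import Mathlib

open Finset

/-- Number of data points in `N` whose feature set contains the feature `v`. -/
def featCount {F X : Type} [DecidableEq F] (feats : X → Finset F)
    (N : Finset X) (v : F) : ℕ :=
  (N.filter fun x => v ∈ feats x).card

/-- `g(v; T, N)`: the frequency of feature `v` among the data points of `N`,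
normalized by the size of the full training set `T`. -/
noncomputable def gval {F X : Type} [DecidableEq F] (feats : X → Finset F)
    (T N : Finset X) (v : F) : ℝ :=
  (featCount feats N v : ℝ) / (T.card : ℝ)

/-- The set of data points of `T` with nonzero gradient: not memorized (not in
`M`) and not well-classified by the learned set `L` (fewer than `τ` of their
features are learned). -/
def active {F X : Type} [DecidableEq F] [DecidableEq X] (feats : X → Finset F) (τ : ℕ)
    (L : Finset F) (M T : Finset X) : Finset X :=
  (T \ M).filter fun x => ((feats x) ∩ L).card < τ

/-- The learned set after the first `i` steps of a run `us` starting from `L0`. -/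
def learnedAfter {F : Type} [DecidableEq F] (L0 : Finset F) (us : List F)
    (i : ℕ) : Finset F :=
  L0 ∪ (us.take i).toFinset

/-- `us` is a valid greedy training run on the dataset `T` with initially
memorized set `M`, starting from the learned set `L0`; `S` is the set of all
features, `τ` the well-classification threshold and `γ` the noise strength.
At every step the model picks a not-yet-learned feature of maximal frequency
`g` among the active (nonzero-gradient) data points; it is learned if its
frequency is at least `γ/|T|`, and at the end of the run every remaining
unlearned feature has frequency below `γ/|T|` (the remaining active points are
then memorized). -/
structure IsRun {F X : Type} [DecidableEq F] [DecidableEq X] (S : Finset F)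
    (feats : X → Finset F) (τ : ℕ) (γ : ℝ) (T M : Finset X)
    (L0 : Finset F) (us : List F) : Prop where
  mem : ∀ i (h : i < us.length), us.get ⟨i, h⟩ ∈ S \ learnedAfter L0 us i
  maximal : ∀ i (h : i < us.length), ∀ u ∈ S \ learnedAfter L0 us i,
    gval feats T (active feats τ (learnedAfter L0 us i) M T) u ≤
      gval feats T (active feats τ (learnedAfter L0 us i) M T) (us.get ⟨i, h⟩)
  threshold : ∀ i (h : i < us.length),
    γ / (T.card : ℝ) ≤
      gval feats T (active feats τ (learnedAfter L0 us i) M T) (us.get ⟨i, h⟩)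
  stopped : ∀ u ∈ S \ learnedAfter L0 us us.length,
    gval feats T (active feats τ (learnedAfter L0 us us.length) M T) u <
      γ / (T.card : ℝ)

/-- The memorized set after a run: the previously memorized points together
with all points that are still active (not well-classified) at the end of the
run. -/
def finalM {F X : Type} [DecidableEq F] [DecidableEq X] (feats : X → Finset F) (τ : ℕ)
    (T M : Finset X) (L0 : Finset F) (us : List F) : Finset X :=
  M ∪ active feats τ (L0 ∪ us.toFinset) M T

/-- The cumulative dataset `T_{1:j}`, the union of the first `j` chunks. -/
def cumT {X : Type} [DecidableEq X] (chunk : ℕ → Finset X) (j : ℕ) : Finset X :=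
  (Finset.Icc 1 j).biUnion chunk

/-- `h(v; L)`: the fraction of data points (of one chunk) containing `v` that
are not well-classified by the learned set `L`. -/
noncomputable def hval {F : Type} [DecidableEq F] (C : ℕ) (Sc : Fin C → Finset F)
    (nA : Fin C → Finset F → ℕ) (τ n : ℕ) (v : F) (L : Finset F) : ℝ :=
  (1 / (n : ℝ)) * ∑ c : Fin C, ∑ A ∈ (Sc c).powerset,
    (nA c A : ℝ) * (if v ∈ A ∧ (A ∩ L).card < τ then 1 else 0)

/-- The test accuracy of a learned feature set `L`. -/
noncomputable def ACC {F : Type} [DecidableEq F] (C : ℕ) (Sc : Fin C → Finset F)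
    (nA : Fin C → Finset F → ℕ) (τ n : ℕ) (L : Finset F) : ℝ :=
  1 - ((C : ℝ) - 1) / (C : ℝ) * ((1 / (n : ℝ)) *
    ∑ c : Fin C, ∑ A ∈ (Sc c).powerset,
      (nA c A : ℝ) * (if (A ∩ L).card < τ then 1 else 0))


section Aux1
variable {F X : Type} [DecidableEq F] [DecidableEq X]
variable {C τ n : ℕ} {Sc : Fin C → Finset F} {label : X → Fin C} {feats : X → Finset F}
  {nA : Fin C → Finset F → ℕ} {T : Finset X}

theorem count_eq
    (hfeats : ∀ x, feats x ⊆ Sc (label x))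
    (hcnt : ∀ c : Fin C, ∀ A ∈ (Sc c).powerset,
      (T.filter fun x => label x = c ∧ feats x = A).card = nA c A)
    (L : Finset F) (u : F) :
    featCount feats (active feats τ L ∅ T) u =
      ∑ c : Fin C, ∑ A ∈ (Sc c).powerset,
        nA c A * (if u ∈ A ∧ (A ∩ L).card < τ then 1 else 0) := by
  have h1 : featCount feats (active feats τ L ∅ T) u =
      ∑ x ∈ T, (fun c A => if u ∈ A ∧ (A ∩ L).card < τ then 1 else 0 : Fin C → Finset F → ℕ)
        (label x) (feats x) := by
    rw [featCount, active, sdiff_empty, filter_filter, card_filter]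
    apply sum_congr rfl
    intro x _
    simp only [and_comm]
  rw [h1, ← Finset.sum_fiberwise (s := T) (g := label)]
  apply sum_congr rfl
  intro c _
  rw [← Finset.sum_fiberwise_of_maps_to (g := feats) (t := (Sc c).powerset)
    (fun x hx => by
      simp only [mem_filter] at hx
      exact mem_powerset.2 (hx.2 ▸ hfeats x))]
  apply sum_congr rfl
  intro A hA
  have : ∀ x ∈ (T.filter fun x => label x = c).filter fun x => feats x = A,
      (fun c A => if u ∈ A ∧ (A ∩ L).card < τ then 1 else 0 : Fin C → Finset F → ℕ)
        (label x) (feats x) = if u ∈ A ∧ (A ∩ L).card < τ then 1 else 0 := by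
    intro x hx
    simp only [mem_filter] at hx
    rw [hx.2]
  rw [sum_congr rfl this, sum_const, filter_filter, hcnt c A hA, smul_eq_mul, mul_comm]

theorem gval_eq_hval
    (hfeats : ∀ x, feats x ⊆ Sc (label x))
    (hcnt : ∀ c : Fin C, ∀ A ∈ (Sc c).powerset,
      (T.filter fun x => label x = c ∧ feats x = A).card = nA c A)
    (hT : T.card = n) (L : Finset F) (u : F) :
    gval feats T (active feats τ L ∅ T) u = hval C Sc nA τ n u L := by
  rw [gval, hval, count_eq hfeats hcnt L u, hT]
  push_cast
  rw [div_eq_mul_inv, mul_comm, one_div]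

theorem hval_restrict {c : Fin C} {v : F}
    (hdisj : ∀ c c', c ≠ c' → Disjoint (Sc c) (Sc c'))
    (hv : v ∈ Sc c) (L : Finset F) :
    hval C Sc nA τ n v L = hval C Sc nA τ n v (L ∩ Sc c) := by
  rw [hval, hval]
  congr 1
  apply sum_congr rfl; intro c' _
  apply sum_congr rfl; intro A hA
  rcases eq_or_ne c' c with rfl | hne
  · have hAL : A ∩ (L ∩ Sc c') = A ∩ L := by
      rw [← inter_assoc, inter_comm A L, inter_assoc,
        inter_eq_left.2 (mem_powerset.1 hA), inter_comm]
    rw [hAL]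
  · have : v ∉ A := fun hvA =>
      absurd ((hdisj c' c hne).le_bot (mem_inter.2 ⟨mem_powerset.1 hA hvA, hv⟩))
        (notMem_empty v)
    simp [this]

theorem hval_antitone {v : F} {L L' : Finset F} (hsub : L ⊆ L') :
    hval C Sc nA τ n v L' ≤ hval C Sc nA τ n v L := by
  rw [hval, hval]
  apply mul_le_mul_of_nonneg_left _ (by positivity)
  apply sum_le_sum; intro c _
  apply sum_le_sum; intro A _
  apply mul_le_mul_of_nonneg_left _ (by positivity)
  split
  · next h =>
    rw [if_pos ⟨h.1, lt_of_le_of_lt (card_le_card (inter_subset_inter le_rfl hsub)) h.2⟩]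
  · split <;> norm_num

theorem hval_small {v : F} {L : Finset F} (hL : L.card < τ) :
    hval C Sc nA τ n v L = hval C Sc nA τ n v ∅ := by
  rw [hval, hval]
  congr 1
  apply sum_congr rfl; intro c _; apply sum_congr rfl; intro A _
  have h1 : (A ∩ L).card < τ := lt_of_le_of_lt (card_le_card (inter_subset_right)) hL
  have h2 : (A ∩ ∅).card < τ := by simpa using lt_of_le_of_lt (Nat.zero_le _) hL
  simp [h1, h2, lt_of_le_of_lt (Nat.zero_le _) hL]

theorem active_empty (hτ : 0 < τ) : active feats τ (∅ : Finset F) (∅ : Finset X) T = T := by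
  rw [active, sdiff_empty, filter_eq_self]
  intro x _
  simpa using hτ

theorem hval_empty
    (hfeats : ∀ x, feats x ⊆ Sc (label x))
    (hcnt : ∀ c : Fin C, ∀ A ∈ (Sc c).powerset,
      (T.filter fun x => label x = c ∧ feats x = A).card = nA c A)
    (hT : T.card = n) (hτ : 0 < τ) (v : F) :
    hval C Sc nA τ n v ∅ = gval feats T T v := by
  rw [← gval_eq_hval hfeats hcnt hT ∅ v, active_empty hτ]


/-- One deterministic greedy step for a single class. -/
noncomputable def pickF (hv : F → Finset F → ℝ) (thr : ℝ) (Scc : Finset F)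
    (L : Finset F) : Finset F :=
  if hx : ∃ w, w ∈ Scc \ L ∧ thr ≤ hv w L ∧ ∀ z ∈ Scc \ L, hv z L ≤ hv w L
  then insert hx.choose L else L

theorem pickF_fix_iter {hv : F → Finset F → ℝ} {thr : ℝ} {Scc L : Finset F}
    (h : pickF hv thr Scc L = L) : ∀ k, (pickF hv thr Scc)^[k] L = L := by
  intro k
  induction k with
  | zero => rfl
  | succ k ih => rw [Function.iterate_succ_apply', ih, h]

end Aux1


section Aux2
variable {F X : Type} [DecidableEq F] [DecidableEq X]
variable {C τ : ℕ} {γ : ℝ} {n : ℕ} {Sc : Fin C → Finset F} {label : X → Fin C}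
  {feats : X → Finset F} {nA : Fin C → Finset F → ℕ} {T : Finset X}

theorem learnedAfter_zero (us : List F) : learnedAfter ∅ us 0 = ∅ := by
  simp [learnedAfter]

theorem learnedAfter_succ (us : List F) (i : ℕ) (h : i < us.length) :
    learnedAfter ∅ us (i + 1) = insert (us.get ⟨i, h⟩) (learnedAfter ∅ us i) := by
  simp only [learnedAfter, Finset.empty_union, List.take_succ,
    List.getElem?_eq_getElem h, List.get_eq_getElem, Option.toList_some,
    List.toFinset_append, List.toFinset_cons, List.toFinset_nil, insert_empty_eq]
  rw [Finset.union_comm, ← Finset.insert_eq]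

theorem learnedAfter_length (us : List F) : learnedAfter ∅ us us.length = us.toFinset := by
  simp [learnedAfter]

theorem run_subset {S : Finset F} {M : Finset X} {us : List F}
    (hrun : IsRun S feats τ γ T M ∅ us) :
    ∀ i, i ≤ us.length → learnedAfter ∅ us i ⊆ S := by
  intro i
  induction i with
  | zero => intro _; rw [learnedAfter_zero]; exact empty_subset _
  | succ i ih =>
    intro hlen
    have hi : i < us.length := hlen
    rw [learnedAfter_succ us i hi]
    exact insert_subset (mem_sdiff.1 (hrun.mem i hi)).1 (ih hi.le)

theorem run_invariant
    (hdisj : ∀ c c', c ≠ c' → Disjoint (Sc c) (Sc c'))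
    (hfeats : ∀ x, feats x ⊆ Sc (label x))
    (hcnt : ∀ c : Fin C, ∀ A ∈ (Sc c).powerset,
      (T.filter fun x => label x = c ∧ feats x = A).card = nA c A)
    (hT : T.card = n)
    (hinj : ∀ L : Finset F, L ⊆ Finset.univ.biUnion Sc →
      ∀ c : Fin C, ∀ v₁ ∈ Sc c, ∀ v₂ ∈ Sc c,
        hval C Sc nA τ n v₁ L = hval C Sc nA τ n v₂ L → v₁ = v₂)
    {us : List F} (hrun : IsRun (Finset.univ.biUnion Sc) feats τ γ T ∅ ∅ us) (c : Fin C) :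
    ∀ i, i ≤ us.length → ∃ k,
      (learnedAfter ∅ us i) ∩ Sc c =
        (pickF (hval C Sc nA τ n) (γ / (n : ℝ)) (Sc c))^[k] ∅ := by
  intro i
  induction i with
  | zero => exact fun _ => ⟨0, by rw [learnedAfter_zero, empty_inter]; rfl⟩
  | succ i ih =>
    intro hlen
    have hi : i < us.length := hlen
    obtain ⟨k, hk⟩ := ih hi.le
    set u := us.get ⟨i, hi⟩ with hu
    set L := learnedAfter ∅ us i with hL
    have hmem := hrun.mem i hi
    rw [learnedAfter_succ us i hi, ← hu, ← hL]
    by_cases huc : u ∈ Sc c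
    · refine ⟨k + 1, ?_⟩
      rw [insert_inter_of_mem huc, Function.iterate_succ_apply', ← hk]
      set Lc := L ∩ Sc c with hLc
      have key : ∀ z ∈ Sc c, gval feats T (active feats τ L ∅ T) z =
          hval C Sc nA τ n z Lc := by
        intro z hz
        rw [gval_eq_hval hfeats hcnt hT L z, hval_restrict hdisj hz L]
      have huL : u ∉ L := (mem_sdiff.1 hmem).2
      have huLc : u ∈ Sc c \ Lc := mem_sdiff.2 ⟨huc, fun h => huL (mem_inter.1 h).1⟩
      have hthr : γ / (n : ℝ) ≤ hval C Sc nA τ n u Lc := by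
        have h2 := hrun.threshold i hi
        rwa [key u huc, hT] at h2
      have hmax : ∀ z ∈ Sc c \ Lc,
          hval C Sc nA τ n z Lc ≤ hval C Sc nA τ n u Lc := by
        intro z hzc
        obtain ⟨hz1, hz2⟩ := mem_sdiff.1 hzc
        have hzS : z ∈ Finset.univ.biUnion Sc \ L :=
          mem_sdiff.2 ⟨mem_biUnion.2 ⟨c, mem_univ c, hz1⟩,
            fun h => hz2 (mem_inter.2 ⟨h, hz1⟩)⟩
        have h2 := hrun.maximal i hi z hzS
        rwa [key z hz1, key u huc] at h2
      have hx : ∃ w, w ∈ Sc c \ Lc ∧ γ / (n : ℝ) ≤ hval C Sc nA τ n w Lc ∧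
          ∀ z ∈ Sc c \ Lc, hval C Sc nA τ n z Lc ≤ hval C Sc nA τ n w Lc :=
        ⟨u, huLc, hthr, hmax⟩
      rw [pickF, dif_pos hx]
      obtain ⟨hw1, hw2, hw3⟩ := hx.choose_spec
      have hce : hx.choose = u := by
        apply hinj Lc
          (Finset.Subset.trans inter_subset_right
            (fun a ha => mem_biUnion.2 ⟨c, mem_univ c, ha⟩)) c
          hx.choose (mem_sdiff.1 hw1).1 u huc
        exact le_antisymm (hmax _ hw1) (hw3 u huLc)
      rw [hce]
    · exact ⟨k, by rw [insert_inter_of_notMem huc, hk]⟩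

theorem run_final_fix
    (hdisj : ∀ c c', c ≠ c' → Disjoint (Sc c) (Sc c'))
    (hfeats : ∀ x, feats x ⊆ Sc (label x))
    (hcnt : ∀ c : Fin C, ∀ A ∈ (Sc c).powerset,
      (T.filter fun x => label x = c ∧ feats x = A).card = nA c A)
    (hT : T.card = n)
    {us : List F} (hrun : IsRun (Finset.univ.biUnion Sc) feats τ γ T ∅ ∅ us) (c : Fin C) :
    pickF (hval C Sc nA τ n) (γ / (n : ℝ)) (Sc c) (us.toFinset ∩ Sc c) =
      us.toFinset ∩ Sc c := by
  rw [pickF, dif_neg]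
  rintro ⟨w, hw1, hw2, -⟩
  obtain ⟨hwc, hwL⟩ := mem_sdiff.1 hw1
  have hwS : w ∈ Finset.univ.biUnion Sc \ learnedAfter ∅ us us.length := by
    rw [learnedAfter_length]
    exact mem_sdiff.2 ⟨mem_biUnion.2 ⟨c, mem_univ c, hwc⟩,
      fun h => hwL (mem_inter.2 ⟨h, hwc⟩)⟩
  have h2 := hrun.stopped w hwS
  rw [learnedAfter_length, gval_eq_hval hfeats hcnt hT, hval_restrict hdisj hwc, hT] at h2
  exact absurd hw2 (not_le.2 h2)

theorem runs_eq
    (hdisj : ∀ c c', c ≠ c' → Disjoint (Sc c) (Sc c'))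
    (hfeats : ∀ x, feats x ⊆ Sc (label x))
    (hcnt : ∀ c : Fin C, ∀ A ∈ (Sc c).powerset,
      (T.filter fun x => label x = c ∧ feats x = A).card = nA c A)
    (hT : T.card = n)
    (hinj : ∀ L : Finset F, L ⊆ Finset.univ.biUnion Sc →
      ∀ c : Fin C, ∀ v₁ ∈ Sc c, ∀ v₂ ∈ Sc c,
        hval C Sc nA τ n v₁ L = hval C Sc nA τ n v₂ L → v₁ = v₂)
    {us vs : List F} (hrun : IsRun (Finset.univ.biUnion Sc) feats τ γ T ∅ ∅ us)
    (hrun' : IsRun (Finset.univ.biUnion Sc) feats τ γ T ∅ ∅ vs) :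
    us.toFinset = vs.toFinset := by
  have hstab : ∀ c : Fin C, ∀ m : ℕ,
      ∀ ws : List F, IsRun (Finset.univ.biUnion Sc) feats τ γ T ∅ ∅ ws →
      ∀ k, ws.toFinset ∩ Sc c = (pickF (hval C Sc nA τ n) (γ / (n : ℝ)) (Sc c))^[k] ∅ →
      k ≤ m → ws.toFinset ∩ Sc c =
        (pickF (hval C Sc nA τ n) (γ / (n : ℝ)) (Sc c))^[m] ∅ := by
    intro c m ws hws k hk hkm
    obtain ⟨d, rfl⟩ := Nat.exists_eq_add_of_le hkm
    rw [Nat.add_comm, Function.iterate_add_apply, ← hk,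
      pickF_fix_iter (run_final_fix hdisj hfeats hcnt hT hws c) d]
  have hcc : ∀ c : Fin C, us.toFinset ∩ Sc c = vs.toFinset ∩ Sc c := by
    intro c
    obtain ⟨k1, hk1⟩ := run_invariant hdisj hfeats hcnt hT hinj hrun c us.length le_rfl
    obtain ⟨k2, hk2⟩ := run_invariant hdisj hfeats hcnt hT hinj hrun' c vs.length le_rfl
    rw [learnedAfter_length] at hk1 hk2
    rw [hstab c (max k1 k2) us hrun k1 hk1 (le_max_left _ _),
      hstab c (max k1 k2) vs hrun' k2 hk2 (le_max_right _ _)]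
  have hsub1 : us.toFinset ⊆ Finset.univ.biUnion Sc := by
    rw [← learnedAfter_length]; exact run_subset hrun us.length le_rfl
  have hsub2 : vs.toFinset ⊆ Finset.univ.biUnion Sc := by
    rw [← learnedAfter_length]; exact run_subset hrun' vs.length le_rfl
  ext a
  constructor
  · intro ha
    obtain ⟨c, -, hc⟩ := mem_biUnion.1 (hsub1 ha)
    have := (hcc c) ▸ mem_inter.2 ⟨ha, hc⟩
    exact (mem_inter.1 this).1
  · intro ha
    obtain ⟨c, -, hc⟩ := mem_biUnion.1 (hsub2 ha)
    have := (hcc c).symm ▸ mem_inter.2 ⟨ha, hc⟩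
    exact (mem_inter.1 this).1


theorem card_filter_fin (τ : ℕ) (hτ : 0 < τ) :
    (Finset.univ.filter fun i : Fin τ => (i : ℕ) + 1 < τ).card = τ - 1 := by
  have he : (Finset.univ.filter fun i : Fin τ => (i : ℕ) + 1 < τ) =
      Finset.Iio ⟨τ - 1, Nat.sub_lt hτ Nat.one_pos⟩ := by
    ext i
    simp only [mem_filter, mem_univ, true_and, Finset.mem_Iio, Fin.lt_def]
    omega
  rw [he, Fin.card_Iio]

end Aux2

/-- first experiment: there is a nonempty `G ⊊ S` such that
the learned set at the end of the first experiment is always `G`, regardless of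
tie-breaking randomness (and warm- and cold-starting coincide in the first
experiment, both running the training process on `T_1` from `L = ∅`, `M = ∅`);
moreover `|G ∩ S_c| ≥ τ - 1` and `G ∩ S_c ⊊ S_c` for every class `c`. -/
theorem first_experiment_learned_set
    {F X : Type} [DecidableEq F] [DecidableEq X]
    (C K τ : ℕ) (γ : ℝ) (n : ℕ)
    (Sc : Fin C → Finset F) (label : X → Fin C) (feats : X → Finset F)
    (nA : Fin C → Finset F → ℕ) (chunk : ℕ → Finset X)
    (hγ : 0 < γ) (hτK : τ < K)
    (hK : ∀ c, (Sc c).card = K)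
    (hdisjS : ∀ c c', c ≠ c' → Disjoint (Sc c) (Sc c'))
    (hfeats : ∀ x, feats x ⊆ Sc (label x))
    (hnA : ∀ c, ∀ A ∈ (Sc c).powerset, 1 ≤ nA c A)
    (hn : n = ∑ c : Fin C, ∑ A ∈ (Sc c).powerset, nA c A)
    (hchunkdisj : ∀ j j', j ≠ j' → Disjoint (chunk j) (chunk j'))
    (hchunkcard : ∀ j, 1 ≤ j → (chunk j).card = n)
    (hcount : ∀ j, 1 ≤ j → ∀ c : Fin C, ∀ A ∈ (Sc c).powerset,
      ((chunk j).filter fun x => label x = c ∧ feats x = A).card = nA c A)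
    (hC : 0 < C) (hτpos : 1 < τ)
    (hinj : ∀ L : Finset F, L ⊆ Finset.univ.biUnion Sc →
      ∀ c : Fin C, ∀ v₁ ∈ Sc c, ∀ v₂ ∈ Sc c,
        hval C Sc nA τ n v₁ L = hval C Sc nA τ n v₂ L → v₁ = v₂)
    (hii : ∀ c : Fin C, ∃ v : Fin τ → F, Function.Injective v ∧ (∀ i, v i ∈ Sc c) ∧
      ∀ j, 1 ≤ j →
        ((∀ i : Fin τ, (i : ℕ) + 1 < τ →
            γ / (n : ℝ) ≤ gval feats (chunk j) (chunk j) (v i)) ∧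
          gval feats (chunk j) (chunk j)
            (v ⟨τ - 1, Nat.sub_lt (Nat.lt_of_lt_of_le Nat.one_pos hτpos.le) Nat.one_pos⟩) < γ / (n : ℝ)))
 :
    ∃ G : Finset F, G.Nonempty ∧ G ⊂ Finset.univ.biUnion Sc ∧
      (∀ us : List F,
        IsRun (Finset.univ.biUnion Sc) feats τ γ (cumT chunk 1) ∅ ∅ us →
          us.toFinset = G) ∧
      (∀ c : Fin C, τ - 1 ≤ (G ∩ Sc c).card ∧ G ∩ Sc c ⊂ Sc c) := by
  classical
  -- Basic facts about the dataset of the first experiment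
  have hT1 : cumT chunk 1 = chunk 1 := by
    simp [cumT]
  set T := cumT chunk 1 with hTdef
  set S := Finset.univ.biUnion Sc with hSdef
  have hTcard : T.card = n := by rw [hT1]; exact hchunkcard 1 le_rfl
  have hcntT : ∀ c : Fin C, ∀ A ∈ (Sc c).powerset,
      (T.filter fun x => label x = c ∧ feats x = A).card = nA c A := by
    intro c A hA; rw [hT1]; exact hcount 1 le_rfl c A hA
  have hτpos0 : 0 < τ := Nat.lt_of_lt_of_le Nat.one_pos hτpos.le
  choose vf hvinj hvmem hvprop using hii
  set vlow : Fin C → F := fun c =>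
    vf c ⟨τ - 1, Nat.sub_lt hτpos0 Nat.one_pos⟩ with hvlowdef
  have hval_init : ∀ v : F, hval C Sc nA τ n v ∅ = gval feats (chunk 1) (chunk 1) v := by
    intro v
    rw [hval_empty hfeats hcntT hTcard hτpos0 v, hT1]
  have hlow_init : ∀ c, hval C Sc nA τ n (vlow c) ∅ < γ / (n : ℝ) := by
    intro c
    rw [hval_init]
    exact (hvprop c 1 le_rfl).2
  have hhigh_init : ∀ c, ∀ i : Fin τ, (i : ℕ) + 1 < τ →
      γ / (n : ℝ) ≤ hval C Sc nA τ n (vf c i) ∅ := by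
    intro c i hi
    rw [hval_init]
    exact (hvprop c 1 le_rfl).1 i hi
  -- (A) the low feature of each class is never learned in any run
  have hlow_not : ∀ us : List F, IsRun S feats τ γ T ∅ ∅ us →
      ∀ c : Fin C, vlow c ∉ us.toFinset := by
    intro us hrun c hmem
    obtain ⟨i, hget⟩ := List.mem_iff_get.1 (List.mem_toFinset.1 hmem)
    have h2 := hrun.threshold i.1 i.2
    rw [hget, hTcard, gval_eq_hval hfeats hcntT hTcard] at h2
    have h3 := hval_antitone (C := C) (Sc := Sc) (nA := nA) (τ := τ) (n := n)
      (v := vlow c) (empty_subset (learnedAfter ∅ us i.1))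
    exact absurd (le_trans h2 h3) (not_le.2 (hlow_init c))
  -- each run's learned set is inside S
  have hsubS : ∀ us : List F, IsRun S feats τ γ T ∅ ∅ us → us.toFinset ⊆ S := by
    intro us hrun
    rw [← learnedAfter_length]
    exact run_subset hrun us.length le_rfl
  -- (B) each run learns at least τ - 1 features of each class
  have hlb : ∀ us : List F, IsRun S feats τ γ T ∅ ∅ us →
      ∀ c : Fin C, τ - 1 ≤ (us.toFinset ∩ Sc c).card := by
    intro us hrun c
    by_contra hlt
    push_neg at hlt
    set Hi := (Finset.univ.filter fun i : Fin τ => (i : ℕ) + 1 < τ).image (vf c) with hHi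
    have hHicard : Hi.card = τ - 1 := by
      rw [hHi, card_image_of_injective _ (hvinj c), card_filter_fin τ hτpos0]
    have hnot : ¬ Hi ⊆ us.toFinset ∩ Sc c := by
      intro hsub
      have := card_le_card hsub
      omega
    obtain ⟨w, hwHi, hwout⟩ := not_subset.1 hnot
    obtain ⟨i, hifil, hiw⟩ := mem_image.1 hwHi
    have hiτ : (i : ℕ) + 1 < τ := (mem_filter.1 hifil).2
    have hwc : w ∈ Sc c := hiw ▸ hvmem c i
    have hwL : w ∉ us.toFinset := fun h => hwout (mem_inter.2 ⟨h, hwc⟩)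
    have hwS : w ∈ S \ learnedAfter ∅ us us.length := by
      rw [learnedAfter_length]
      exact mem_sdiff.2 ⟨mem_biUnion.2 ⟨c, mem_univ c, hwc⟩, hwL⟩
    have h2 := hrun.stopped w hwS
    rw [learnedAfter_length, gval_eq_hval hfeats hcntT hTcard,
      hval_restrict hdisjS hwc, hval_small (lt_of_lt_of_le hlt (Nat.sub_le τ 1)),
      hTcard] at h2
    exact absurd (hiw ▸ hhigh_init c i hiτ) (not_le.2 h2)
  have hone : 1 ≤ τ - 1 := by omega
  set c0 : Fin C := ⟨0, hC⟩ with hc0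
  by_cases hex : ∃ us : List F, IsRun S feats τ γ T ∅ ∅ us
  · obtain ⟨us₀, h₀⟩ := hex
    refine ⟨us₀.toFinset, ?_, ?_, ?_, ?_⟩
    · have h1 : 0 < (us₀.toFinset ∩ Sc c0).card :=
        Nat.lt_of_lt_of_le Nat.zero_lt_one (le_trans hone (hlb us₀ h₀ c0))
      obtain ⟨a, ha⟩ := card_pos.1 h1
      exact ⟨a, (mem_inter.1 ha).1⟩
    · refine (Finset.ssubset_iff_of_subset (hsubS us₀ h₀)).2
        ⟨vlow c0, mem_biUnion.2 ⟨c0, mem_univ c0, hvmem c0 _⟩, hlow_not us₀ h₀ c0⟩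
    · intro us hrun
      exact runs_eq hdisjS hfeats hcntT hTcard hinj hrun h₀
    · intro c
      refine ⟨hlb us₀ h₀ c, (Finset.ssubset_iff_of_subset inter_subset_right).2
        ⟨vlow c, hvmem c _, fun h => hlow_not us₀ h₀ c (mem_inter.1 h).1⟩⟩
  · -- no run exists: the statement about runs is vacuous
    set G : Finset F := Finset.univ.biUnion fun c =>
      (Finset.univ.filter fun i : Fin τ => (i : ℕ) + 1 < τ).image (vf c) with hG
    have hGc : ∀ c : Fin C, G ∩ Sc c =
        (Finset.univ.filter fun i : Fin τ => (i : ℕ) + 1 < τ).image (vf c) := by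
      intro c
      ext a
      simp only [hG, mem_inter, mem_biUnion, mem_univ, true_and]
      constructor
      · rintro ⟨⟨c', hc'⟩, hac⟩
        obtain ⟨i, hifil, hiw⟩ := mem_image.1 hc'
        rcases eq_or_ne c' c with rfl | hne
        · exact hc'
        · exact absurd (mem_inter.2 ⟨hiw ▸ hvmem c' i, hac⟩)
            (fun h => absurd ((hdisjS c' c hne).le_bot h) (notMem_empty a))
      · intro ha
        obtain ⟨i, hifil, hiw⟩ := mem_image.1 ha
        exact ⟨⟨c, ha⟩, hiw ▸ hvmem c i⟩
    have hGcard : ∀ c : Fin C, (G ∩ Sc c).card = τ - 1 := by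
      intro c
      rw [hGc c, card_image_of_injective _ (hvinj c), card_filter_fin τ hτpos0]
    have hGsub : G ⊆ S := by
      intro a ha
      obtain ⟨c, -, hc⟩ := mem_biUnion.1 ha
      obtain ⟨i, -, hiw⟩ := mem_image.1 hc
      exact mem_biUnion.2 ⟨c, mem_univ c, hiw ▸ hvmem c i⟩
    have hlowG : ∀ c : Fin C, vlow c ∉ G ∩ Sc c := by
      intro c h
      rw [hGc c] at h
      obtain ⟨i, hifil, hiw⟩ := mem_image.1 h
      have : i = ⟨τ - 1, Nat.sub_lt hτpos0 Nat.one_pos⟩ := hvinj c hiw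
      have hiτ : (i : ℕ) + 1 < τ := (mem_filter.1 hifil).2
      rw [this] at hiτ
      simp only [] at hiτ
      omega
    refine ⟨G, ?_, ?_, ?_, ?_⟩
    · have h1 : 0 < (G ∩ Sc c0).card := by rw [hGcard c0]; omega
      obtain ⟨a, ha⟩ := card_pos.1 h1
      exact ⟨a, (mem_inter.1 ha).1⟩
    · refine (Finset.ssubset_iff_of_subset hGsub).2
        ⟨vlow c0, mem_biUnion.2 ⟨c0, mem_univ c0, hvmem c0 _⟩, ?_⟩
      intro h
      exact hlowG c0 (mem_inter.2 ⟨h, hvmem c0 _⟩)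
    · intro us hrun
      exact absurd ⟨us, hrun⟩ hex
    · intro c
      refine ⟨(hGcard c).ge, (Finset.ssubset_iff_of_subset inter_subset_right).2
        ⟨vlow c, hvmem c _, hlowG c⟩⟩
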